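/- Let ζ ∈ ℂ³ of the admissible form with ζ·ζ = 0. For each α ∈ Z̃³ there is a constant C_ζ > 0 (independent of α) such that |(1 + α·α)/(α·α + 2ζ·α)| ≤ C_ζ. Consequently G_ζ maps L²(Q) boundedly into H²(Q). -/

import Mathlib

open Complex

/-- α·α = |α|² for α = (β₁, β₂, β₃ - 1/2) ∈ Z̃³. -/
noncomputable def alphaNormSq (β : ℤ × ℤ × ℤ) : ℝ :=
  (β.1 : ℝ) ^ 2 + (β.2.1 : ℝ) ^ 2 + ((β.2.2 : ℝ) - 1 / 2) ^ 2

/-- The denominator α·α + 2ζ·α for ζ = (z1, m - 1/2, i t), t = (z1²+(m-1/2)²)^{1/2}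
(so that ζ·ζ = 0). -/
noncomputable def zetaDenom (z1 m : ℤ) (β : ℤ × ℤ × ℤ) : ℂ :=
  ((alphaNormSq β : ℝ) : ℂ)
    + 2 * (((z1 : ℝ) : ℂ) * ((β.1 : ℝ) : ℂ)
        + (((m : ℝ) - 1 / 2 : ℝ) : ℂ) * ((β.2.1 : ℝ) : ℂ)
        + Complex.I * ((Real.sqrt ((z1 : ℝ) ^ 2 + ((m : ℝ) - 1 / 2) ^ 2) : ℝ) : ℂ)
            * (((β.2.2 : ℝ) - 1 / 2 : ℝ) : ℂ))

set_option maxHeartbeats 1000000 in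
/-- the multiplier (1 + α·α)/(α·α + 2ζ·α) is bounded uniformly in α ∈ Z̃³
by a constant C_ζ; consequently G_ζ maps L²(Q) boundedly into H²(Q), expressed via the
Fourier characterization of H²: square-summable coefficients are mapped to coefficients
with ∑ (1+|α|²)² |ĝ_α|² < ∞. -/
theorem stmt3 (z1 m : ℤ) :
    ∃ C > 0,
      (∀ β : ℤ × ℤ × ℤ,
        ‖((1 + ((alphaNormSq β : ℝ) : ℂ)) / zetaDenom z1 m β)‖ ≤ C) ∧
      ∀ fc : ℤ × ℤ × ℤ → ℂ, Summable (fun β => ‖fc β‖ ^ 2) →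
        Summable (fun β => (1 + alphaNormSq β) ^ 2 * ‖fc β / zetaDenom z1 m β‖ ^ 2) := by
  set t := Real.sqrt ((z1 : ℝ) ^ 2 + ((m : ℝ) - 1 / 2) ^ 2) with ht_def
  have hm : ((m : ℝ) - 1 / 2) ≠ 0 := by
    intro h
    have h2 : ((2 * m : ℤ) : ℝ) = 1 := by push_cast; linarith
    have : (2 * m : ℤ) = 1 := by exact_mod_cast h2
    omega
  have ht : 0 < t := Real.sqrt_pos.mpr (by positivity)
  have ht2 : t ^ 2 = (z1 : ℝ) ^ 2 + ((m : ℝ) - 1 / 2) ^ 2 :=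
    Real.sq_sqrt (by positivity)
  set C := max 10 ((1 + 48 * t ^ 2) / t) with hC_def
  have hC : 0 < C := lt_of_lt_of_le (by norm_num) (le_max_left _ _)
  have hwhalf : ∀ β : ℤ × ℤ × ℤ, (1/2 : ℝ) ≤ |(β.2.2 : ℝ) - 1/2| := by
    intro β
    rcases le_or_gt 1 β.2.2 with h | h
    · have h' : (1:ℝ) ≤ (β.2.2 : ℝ) := by exact_mod_cast h
      rw [abs_of_pos (by linarith)]; linarith
    · have h' : (β.2.2 : ℝ) ≤ 0 := by exact_mod_cast Int.lt_add_one_iff.mp h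
      rw [abs_of_neg (by linarith)]; linarith
  have hDge : ∀ β : ℤ × ℤ × ℤ, t ≤ ‖(zetaDenom z1 m β)‖ := by
    intro β
    have him : (zetaDenom z1 m β).im = 2 * t * ((β.2.2 : ℝ) - 1/2) := by
      simp only [zetaDenom, ← ht_def, Complex.add_im, Complex.ofReal_im, Complex.mul_im,
        Complex.mul_re, Complex.ofReal_re, Complex.I_re, Complex.I_im, Complex.add_re,
        Complex.re_ofNat, Complex.im_ofNat]
      ring
    have h1 := Complex.abs_im_le_norm (zetaDenom z1 m β)
    rw [him, abs_mul, _root_.abs_of_nonneg (by positivity : (0:ℝ) ≤ 2 * t)] at h1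
    nlinarith [hwhalf β]
  -- the uniform bound
  have key : ∀ β : ℤ × ℤ × ℤ,
      (1 + alphaNormSq β) / ‖(zetaDenom z1 m β)‖ ≤ C := by
    intro β
    set A := alphaNormSq β with hA_def
    set w := ((β.2.2 : ℝ) - 1 / 2) with hw_def
    have hA4 : (1/4 : ℝ) ≤ A := by
      have hwh : (1/2:ℝ) ≤ |w| := hwhalf β
      have hw2 : (1/2:ℝ)^2 ≤ w^2 := by
        have h := pow_le_pow_left₀ (by norm_num : (0:ℝ) ≤ 1/2) hwh 2
        rwa [_root_.sq_abs] at h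
      simp only [hA_def, alphaNormSq, ← hw_def]
      nlinarith [sq_nonneg (β.1:ℝ), sq_nonneg (β.2.1:ℝ)]
    have hDt : t ≤ ‖(zetaDenom z1 m β)‖ := hDge β
    have hDpos : 0 < ‖(zetaDenom z1 m β)‖ := lt_of_lt_of_le ht hDt
    rcases le_or_gt (48 * t ^ 2) A with hbig | hsmall
    · -- large A: ‖D‖ ≥ A/2
      have hE : ‖(zetaDenom z1 m β - ((A : ℝ) : ℂ))‖
          ≤ 2 * t * (|(β.1 : ℝ)| + |(β.2.1 : ℝ)| + |w|) := by
        have heq : zetaDenom z1 m β - ((A : ℝ) : ℂ)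
            = 2 * (((z1 : ℝ) : ℂ) * ((β.1 : ℝ) : ℂ)
              + (((m : ℝ) - 1 / 2 : ℝ) : ℂ) * ((β.2.1 : ℝ) : ℂ)
              + Complex.I * ((t : ℝ) : ℂ) * ((w : ℝ) : ℂ)) := by
          simp only [zetaDenom, ← ht_def, ← hw_def, hA_def]; ring
        rw [heq]
        have hz1t : |(z1 : ℝ)| ≤ t := by
          rw [← Real.sqrt_sq_eq_abs]
          exact Real.sqrt_le_sqrt (by nlinarith [sq_nonneg ((m:ℝ) - 1/2)])
        have hmt : |(m : ℝ) - 1/2| ≤ t := by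
          rw [← Real.sqrt_sq_eq_abs]
          exact Real.sqrt_le_sqrt (by nlinarith [sq_nonneg (z1:ℝ)])
        set c1 : ℂ := ((z1 : ℝ) : ℂ) * ((β.1 : ℝ) : ℂ) with hc1
        set c2 : ℂ := (((m : ℝ) - 1 / 2 : ℝ) : ℂ) * ((β.2.1 : ℝ) : ℂ) with hc2
        set c3 : ℂ := Complex.I * ((t : ℝ) : ℂ) * ((w : ℝ) : ℂ) with hc3
        have habs1 : ‖c1‖ = |(z1:ℝ)| * |(β.1:ℝ)| := by
          rw [hc1, norm_mul, Complex.norm_real, Real.norm_eq_abs, Complex.norm_real, Real.norm_eq_abs]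
        have habs2 : ‖c2‖ = |(m:ℝ) - 1/2| * |(β.2.1:ℝ)| := by
          rw [hc2, norm_mul, Complex.norm_real, Real.norm_eq_abs, Complex.norm_real, Real.norm_eq_abs]
        have habs3 : ‖c3‖ = t * |w| := by
          rw [hc3, norm_mul, norm_mul, Complex.norm_I, Complex.norm_real, Real.norm_eq_abs,
            Complex.norm_real, Real.norm_eq_abs, one_mul, _root_.abs_of_pos ht]
        have htri := norm_add_le (c1 + c2) c3
        have htri2 := norm_add_le c1 c2
        have h2abs : ‖(2 * (c1 + c2 + c3))‖ = 2 * ‖(c1 + c2 + c3)‖ := by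
          rw [norm_mul, Complex.norm_two]
        rw [h2abs]
        have h1 : |(z1:ℝ)| * |(β.1:ℝ)| ≤ t * |(β.1:ℝ)| :=
          mul_le_mul_of_nonneg_right hz1t (abs_nonneg _)
        have h2 : |(m:ℝ) - 1/2| * |(β.2.1:ℝ)| ≤ t * |(β.2.1:ℝ)| :=
          mul_le_mul_of_nonneg_right hmt (abs_nonneg _)
        have hsum : ‖(c1 + c2 + c3)‖
            ≤ t * |(β.1:ℝ)| + t * |(β.2.1:ℝ)| + t * |w| := by
          rw [habs1, habs2, habs3] at *
          linarith
        nlinarith [hsum]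
      have hs2 : (|(β.1 : ℝ)| + |(β.2.1 : ℝ)| + |w|) ^ 2 ≤ 3 * A := by
        simp only [hA_def, alphaNormSq, ← hw_def]
        nlinarith [sq_nonneg (|(β.1:ℝ)| - |(β.2.1:ℝ)|), sq_nonneg (|(β.1:ℝ)| - |w|),
          sq_nonneg (|(β.2.1:ℝ)| - |w|), _root_.sq_abs (β.1:ℝ), _root_.sq_abs (β.2.1:ℝ), _root_.sq_abs w]
      have hD2 : A / 2 ≤ ‖(zetaDenom z1 m β)‖ := by
        have hAbsA : ‖((A : ℝ) : ℂ)‖ = A := by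
          rw [Complex.norm_real, Real.norm_eq_abs]; exact abs_of_nonneg (by linarith)
        have htri : A ≤ ‖(zetaDenom z1 m β)‖
            + ‖(zetaDenom z1 m β - ((A : ℝ) : ℂ))‖ := by
          have h := norm_add_le (zetaDenom z1 m β) (-(zetaDenom z1 m β - ((A : ℝ) : ℂ)))
          have heqA : zetaDenom z1 m β + -(zetaDenom z1 m β - ((A : ℝ) : ℂ)) = ((A : ℝ) : ℂ) := by
            ring
          rw [heqA, norm_neg, hAbsA] at h
          exact h
        set s := |(β.1 : ℝ)| + |(β.2.1 : ℝ)| + |w| with hs_def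
        have hsnn : 0 ≤ s := by positivity
        have h4ts : 4 * t * s ≤ A := by nlinarith
        linarith
      rw [div_le_iff₀ hDpos]
      calc 1 + A ≤ 10 * (A / 2) := by linarith
        _ ≤ 10 * ‖(zetaDenom z1 m β)‖ := by linarith
        _ ≤ C * ‖(zetaDenom z1 m β)‖ := by
            have : (10:ℝ) ≤ C := le_max_left _ _
            nlinarith
    · -- small A
      have h := div_le_div₀ (by positivity : (0:ℝ) ≤ 1 + 48 * t ^ 2)
        (by linarith : 1 + A ≤ 1 + 48 * t ^ 2) ht hDt
      exact h.trans (le_max_right _ _)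
  have hAnn : ∀ β : ℤ × ℤ × ℤ, (0:ℝ) ≤ alphaNormSq β := by
    intro β; unfold alphaNormSq; positivity
  have habs : ∀ β : ℤ × ℤ × ℤ,
      ‖((1 + ((alphaNormSq β : ℝ) : ℂ)) / zetaDenom z1 m β)‖
        = (1 + alphaNormSq β) / ‖(zetaDenom z1 m β)‖ := by
    intro β
    rw [norm_div]
    congr 1
    have h : (1 : ℂ) + ((alphaNormSq β : ℝ) : ℂ) = (((1 + alphaNormSq β : ℝ)) : ℂ) := by
      push_cast; ring
    rw [h, Complex.norm_real, Real.norm_eq_abs, _root_.abs_of_nonneg (by linarith [hAnn β])]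
  refine ⟨C, hC, fun β => ?_, fun fc hfc => ?_⟩
  · rw [habs β]; exact key β
  apply Summable.of_nonneg_of_le (fun β => by positivity) (fun β => ?_) (hfc.mul_left (C ^ 2))
  have hDpos : 0 < ‖(zetaDenom z1 m β)‖ := lt_of_lt_of_le ht (hDge β)
  have hD : ‖zetaDenom z1 m β‖ = ‖(zetaDenom z1 m β)‖ := rfl
  rw [norm_div, hD]
  have heq : (1 + alphaNormSq β) ^ 2 * (‖fc β‖ / ‖(zetaDenom z1 m β)‖) ^ 2
      = ((1 + alphaNormSq β) / ‖(zetaDenom z1 m β)‖) ^ 2 * ‖fc β‖ ^ 2 := by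
    ring
  rw [heq]
  have hsq : ((1 + alphaNormSq β) / ‖(zetaDenom z1 m β)‖) ^ 2 ≤ C ^ 2 := by
    have hnn : 0 ≤ (1 + alphaNormSq β) / ‖(zetaDenom z1 m β)‖ := by
      apply div_nonneg (by linarith [hAnn β]) hDpos.le
    nlinarith [key β]
  exact mul_le_mul_of_nonneg_right hsq (by positivity)
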